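/- arXiv:1806.05451 — 2 statements merged into one kernel-verified Lean document; each statement's English description precedes it below -/
import Mathlib

section
/- Let 0 <= q_d <= 1 and ξ ~ N(0,1). Then E[ erf( (√(q_d/(1-q_d)) ξ)/√2 )² ] = (2/π) arcsin(q_d). -/
open MeasureTheory ProbabilityTheory Real

/-- The error function `erf x = (2/√π) ∫₀ˣ e^{-t²} dt`. -/
noncomputable def errorFun (x : ℝ) : ℝ :=
  (2 / Real.sqrt Real.pi) * ∫ t in (0:ℝ)..x, Real.exp (-t ^ 2)

section Helpers
open Set
open scoped ENNReal NNReal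

lemma moment2 (c : ℝ) (hc : 0 < c) :
    ∫ x : ℝ, x ^ 2 * Real.exp (-(c/2) * x ^ 2) = Real.sqrt (2*π) / (c * Real.sqrt c) := by
  have hb : 0 < c/2 := by linarith
  have h1 : ∫ x in Ioi (0:ℝ), x ^ ((2:ℕ):ℝ) * Real.exp (-(c/2) * x ^ ((2:ℕ):ℝ))
      = (c/2) ^ (-(((2:ℕ):ℝ) + 1) / ((2:ℕ):ℝ)) * (1 / ((2:ℕ):ℝ)) *
        Real.Gamma ((((2:ℕ):ℝ) + 1) / ((2:ℕ):ℝ)) :=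
    integral_rpow_mul_exp_neg_mul_rpow (by norm_num) (by norm_num) hb
  simp only [Real.rpow_natCast] at h1
  norm_num at h1
  have hgamma : Real.Gamma (3/2) = Real.sqrt π / 2 := by
    have := Real.Gamma_add_one (s := 1/2) (by norm_num)
    rw [show (3:ℝ)/2 = 1/2 + 1 by norm_num, this, Real.Gamma_one_half_eq]
    ring
  have heven : ∫ x : ℝ, x ^ 2 * Real.exp (-(c/2) * x ^ 2)
      = 2 * ∫ x in Ioi (0:ℝ), x ^ 2 * Real.exp (-(c/2) * x ^ 2) := by
    rw [← integral_comp_abs (f := fun x => x ^ 2 * Real.exp (-(c/2) * x ^ 2))]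
    simp [sq_abs]
  have hc' : Real.sqrt c > 0 := Real.sqrt_pos.2 hc
  have h2 : Real.sqrt 2 > 0 := Real.sqrt_pos.2 (by norm_num)
  have hpow : (c/2) ^ (-(3/2) : ℝ) = 2 * Real.sqrt 2 / (c * Real.sqrt c) := by
    rw [Real.rpow_neg hb.le,
      show (3:ℝ)/2 = 1 + 1/2 by norm_num, Real.rpow_add hb, Real.rpow_one,
      ← Real.sqrt_eq_rpow, Real.sqrt_div hc.le]
    rw [eq_div_iff (by positivity)]
    field_simp
  have hform : ∀ x : ℝ, x ^ 2 * Real.exp (-(c/2 * x ^ 2)) = x ^ 2 * Real.exp (-(c/2) * x ^ 2) := by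
    intro x; ring_nf
  rw [heven]
  rw [show (∫ x in Ioi (0:ℝ), x ^ 2 * Real.exp (-(c/2) * x ^ 2))
      = ∫ x in Ioi (0:ℝ), x ^ 2 * Real.exp (-(c/2 * x ^ 2)) from by
    exact setIntegral_congr_fun measurableSet_Ioi (fun x _ => (hform x).symm)]
  rw [h1, hgamma, hpow]
  rw [Real.sqrt_mul (by norm_num : (0:ℝ) ≤ 2)]
  field_simp

-- L1
lemma errorFun_eq (x : ℝ) :
    errorFun x = (2 / Real.sqrt π) * (x * ∫ v in (0:ℝ)..1, Real.exp (-(x*v) ^ 2)) := by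
  rcases eq_or_ne x 0 with rfl | hx
  · simp [errorFun]
  · unfold errorFun
    congr 1
    have := intervalIntegral.integral_comp_mul_left (a := (0:ℝ)) (b := 1)
      (fun t => Real.exp (-t ^ 2)) hx
    rw [mul_zero, mul_one] at this
    rw [this, smul_eq_mul, ← mul_assoc, mul_inv_cancel₀ hx, one_mul]

-- L2
lemma integral_gaussianReal_std (f : ℝ → ℝ) :
    ∫ x, f x ∂(gaussianReal 0 1) = ∫ x, gaussianPDFReal 0 1 x * f x := by
  rw [gaussianReal_of_var_ne_zero 0 one_ne_zero, gaussianPDF_def]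
  have : (fun x => ENNReal.ofReal (gaussianPDFReal 0 1 x))
      = fun x => ((fun x => (gaussianPDFReal 0 1 x).toNNReal) x : ℝ≥0∞) := rfl
  rw [this, integral_withDensity_eq_integral_smul
    ((measurable_gaussianPDFReal 0 1).real_toNNReal) f]
  congr 1; funext x
  rw [NNReal.smul_def, smul_eq_mul, Real.coe_toNNReal _ (gaussianPDFReal_nonneg 0 1 x)]

-- pdf formula
lemma gaussianPDFReal_std (x : ℝ) :
    gaussianPDFReal 0 1 x = (Real.sqrt (2*π))⁻¹ * Real.exp (-(1/2) * x ^ 2) := by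
  simp only [gaussianPDFReal, NNReal.coe_one, mul_one, sub_zero]
  ring_nf

lemma bound_integrable : Integrable (fun x : ℝ => x ^ 2 * Real.exp (-(1/2 : ℝ) * x ^ 2)) := by
  have := integrable_rpow_mul_exp_neg_mul_sq (b := 1/2) (by norm_num) (s := 2) (by norm_num)
  simpa using this

lemma fubini_aux {f : ℝ → ℝ → ℝ} (hf : Continuous (Function.uncurry f))
    (hb : ∀ x v, v ∈ Set.Ioc (0:ℝ) 1 → ‖f x v‖ ≤ x ^ 2 * Real.exp (-(1/2 : ℝ) * x ^ 2)) :
    ∫ x : ℝ, ∫ v in Set.Ioc (0:ℝ) 1, f x v = ∫ v in Set.Ioc (0:ℝ) 1, ∫ x : ℝ, f x v := by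
  have hmeas : AEStronglyMeasurable (Function.uncurry f)
      (volume.prod (volume.restrict (Ioc (0:ℝ) 1))) := hf.aestronglyMeasurable
  have hIoc : ∀ x : ℝ, IntegrableOn (fun v => f x v) (Ioc 0 1) volume := fun x =>
    (hf.comp (continuous_const.prodMk continuous_id)).integrableOn_Ioc
  have hint : Integrable (Function.uncurry f) (volume.prod (volume.restrict (Ioc (0:ℝ) 1))) := by
    rw [MeasureTheory.integrable_prod_iff hmeas]
    refine ⟨ae_of_all _ fun x => hIoc x, ?_⟩
    apply Integrable.mono' bound_integrable (hmeas.norm.integral_prod_right')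
    refine ae_of_all _ fun x => ?_
    simp only [Function.uncurry_apply_pair]
    have h1 : (0:ℝ) ≤ ∫ v in Ioc (0:ℝ) 1, ‖f x v‖ :=
      integral_nonneg fun v => norm_nonneg _
    rw [Real.norm_of_nonneg h1]
    calc ∫ v in Ioc (0:ℝ) 1, ‖f x v‖
        ≤ ∫ _v in Ioc (0:ℝ) 1, x ^ 2 * Real.exp (-(1/2 : ℝ) * x ^ 2) := by
          apply integral_mono_of_nonneg (ae_of_all _ fun v => norm_nonneg _)
            (integrable_const _)
          rw [Filter.EventuallyLE, ae_restrict_iff' measurableSet_Ioc]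
          exact ae_of_all _ fun v hv => hb x v hv
      _ = x ^ 2 * Real.exp (-(1/2 : ℝ) * x ^ 2) := by
          simp [Measure.restrict_apply]
  exact integral_integral_swap hint

-- L4
lemma inner_ftc (A k : ℝ) (hA : 0 < A) (hk : 0 ≤ k) :
    ∫ w in (0:ℝ)..1, 1 / ((A + k * w ^ 2) * Real.sqrt (A + k * w ^ 2))
      = 1 / (A * Real.sqrt (A + k)) := by
  have hpos : ∀ w : ℝ, 0 < A + k * w ^ 2 := fun w => by positivity
  have hderiv : ∀ w ∈ Set.uIcc (0:ℝ) 1,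
      HasDerivAt (fun w => w / (A * Real.sqrt (A + k * w ^ 2)))
        (1 / ((A + k * w ^ 2) * Real.sqrt (A + k * w ^ 2))) w := by
    intro w _
    have hu : HasDerivAt (fun w : ℝ => A + k * w ^ 2) (k * (2 * w)) w := by
      simpa using ((hasDerivAt_pow 2 w).const_mul k).const_add A
    have hs : HasDerivAt (fun w : ℝ => Real.sqrt (A + k * w ^ 2))
        (k * (2 * w) / (2 * Real.sqrt (A + k * w ^ 2))) w := hu.sqrt (ne_of_gt (hpos w))
    have hden : HasDerivAt (fun w : ℝ => A * Real.sqrt (A + k * w ^ 2))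
        (A * (k * (2 * w) / (2 * Real.sqrt (A + k * w ^ 2)))) w := hs.const_mul A
    have hsq : Real.sqrt (A + k * w ^ 2) * Real.sqrt (A + k * w ^ 2) = A + k * w ^ 2 :=
      Real.mul_self_sqrt (hpos w).le
    have hs0 : 0 < Real.sqrt (A + k * w ^ 2) := Real.sqrt_pos.2 (hpos w)
    have hdiv := (hasDerivAt_id w).div hden (by positivity)
    convert hdiv using 1
    · rfl
    · rfl
    · rfl
    set s := Real.sqrt (A + k * w ^ 2) with hsdef
    rw [show A + k * w ^ 2 = s * s from hsq.symm]
    field_simp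
    simp only [id_eq]
    linear_combination (-1) * hsq
  have hcont : Continuous fun w : ℝ => 1 / ((A + k * w ^ 2) * Real.sqrt (A + k * w ^ 2)) := by
    apply continuous_const.div
    · exact ((continuous_const.add (continuous_const.mul (continuous_pow 2))).mul
        ((continuous_const.add (continuous_const.mul (continuous_pow 2))).sqrt))
    · intro w
      have := hpos w
      positivity
  have := intervalIntegral.integral_eq_sub_of_hasDerivAt hderiv
    (hcont.intervalIntegrable 0 1)
  rw [this]
  norm_num

-- L5
lemma outer_ftc (k : ℝ) (hk : 0 < k) :
    ∫ v in (0:ℝ)..1, 1 / ((1 + k * v ^ 2) * Real.sqrt (1 + k + k * v ^ 2))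
      = (1/k) * Real.arctan (k / Real.sqrt (1 + 2*k)) := by
  have hpos : ∀ v : ℝ, (0:ℝ) < 1 + k + k * v ^ 2 := fun v => by positivity
  have hpos2 : ∀ v : ℝ, (0:ℝ) < 1 + k * v ^ 2 := fun v => by positivity
  have hderiv : ∀ v ∈ Set.uIcc (0:ℝ) 1,
      HasDerivAt (fun v => (1/k) * Real.arctan (k * v / Real.sqrt (1 + k + k * v ^ 2)))
        (1 / ((1 + k * v ^ 2) * Real.sqrt (1 + k + k * v ^ 2))) v := by
    intro v _
    have hu : HasDerivAt (fun v : ℝ => 1 + k + k * v ^ 2) (k * (2 * v)) v := by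
      simpa using ((hasDerivAt_pow 2 v).const_mul k).const_add (1 + k)
    have hs : HasDerivAt (fun v : ℝ => Real.sqrt (1 + k + k * v ^ 2))
        (k * (2 * v) / (2 * Real.sqrt (1 + k + k * v ^ 2))) v := hu.sqrt (ne_of_gt (hpos v))
    have hnum : HasDerivAt (fun v : ℝ => k * v) k v := by
      simpa using (hasDerivAt_id v).const_mul k
    have hs0 : 0 < Real.sqrt (1 + k + k * v ^ 2) := Real.sqrt_pos.2 (hpos v)
    have hfrac : HasDerivAt (fun v : ℝ => k * v / Real.sqrt (1 + k + k * v ^ 2))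
        ((k * Real.sqrt (1 + k + k * v ^ 2)
          - k * v * (k * (2 * v) / (2 * Real.sqrt (1 + k + k * v ^ 2))))
          / (Real.sqrt (1 + k + k * v ^ 2)) ^ 2) v := hnum.div hs (ne_of_gt hs0)
    have harctan := (hfrac.arctan).const_mul (1/k)
    convert harctan using 1
    · rfl
    · rfl
    set s := Real.sqrt (1 + k + k * v ^ 2) with hsdef
    have hsq : s * s = 1 + k + k * v ^ 2 := Real.mul_self_sqrt (hpos v).le
    have h1 : (1:ℝ) + (k * v / s) ^ 2 ≠ 0 := by positivity
    field_simp
    linear_combination (-k*v^2) * hsq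
  have hcont : Continuous fun v : ℝ => 1 / ((1 + k * v ^ 2) * Real.sqrt (1 + k + k * v ^ 2)) := by
    apply continuous_const.div
    · exact ((continuous_const.add (continuous_const.mul (continuous_pow 2))).mul
        ((continuous_const.add (continuous_const.mul (continuous_pow 2))).sqrt))
    · intro v
      have h1 := hpos v
      have h2 := hpos2 v
      have h3 : 0 < Real.sqrt (1 + k + k * v ^ 2) := Real.sqrt_pos.2 h1
      positivity
  rw [intervalIntegral.integral_eq_sub_of_hasDerivAt hderiv (hcont.intervalIntegrable 0 1)]
  rw [show k * 1 / Real.sqrt (1 + k + k * 1 ^ 2) = k / Real.sqrt (1 + 2*k) by norm_num; ring_nf]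
  norm_num

lemma continuous_paramI (k : ℝ) (hk : 0 ≤ k) :
    Continuous fun x : ℝ => ∫ v in Ioc (0:ℝ) 1, Real.exp (-(k * v ^ 2 / 2) * x ^ 2) := by
  apply continuous_of_dominated (bound := fun _ => (1:ℝ))
  · exact fun x => (Continuous.aestronglyMeasurable (by continuity))
  · intro x
    refine ae_of_all _ fun v => ?_
    rw [Real.norm_of_nonneg (Real.exp_nonneg _)]
    exact Real.exp_le_one_iff.2 (by nlinarith [sq_nonneg v, sq_nonneg x, sq_nonneg (v*x)])
  · exact (integrableOn_const (by simp [measure_Ioc_lt_top]))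
  · exact ae_of_all _ fun v => by continuity

lemma arctan_eq_arcsin_qd (qd : ℝ) (h0 : 0 < qd) (h1 : qd < 1) :
    Real.arctan ((qd / (1 - qd)) / Real.sqrt (1 + 2 * (qd / (1 - qd)))) = Real.arcsin qd := by
  have h1' : (0:ℝ) < 1 - qd := by linarith
  have h2' : (0:ℝ) < 1 + qd := by linarith
  rw [Real.arcsin_eq_arctan (by constructor <;> [linarith; linarith])]
  congr 1
  have e1 : 1 + 2 * (qd / (1 - qd)) = (1 + qd) / (1 - qd) := by field_simp; ring
  have e2 : 1 - qd ^ 2 = (1 - qd) * (1 + qd) := by ring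
  rw [e1, e2, Real.sqrt_div h2'.le, Real.sqrt_mul h1'.le]
  have hs : 0 < Real.sqrt (1 - qd) := Real.sqrt_pos.2 h1'
  have ht : 0 < Real.sqrt (1 + qd) := Real.sqrt_pos.2 h2'
  have hs2 : Real.sqrt (1 - qd) * Real.sqrt (1 - qd) = 1 - qd := Real.mul_self_sqrt h1'.le
  field_simp
  linear_combination hs2

end Helpers

section Main
open Set

/-- With `Ĥ(x) = erf(x/√2)`, `0 ≤ q_d < 1` (the case `q_d = 1` being understood as a limit) and
`ξ ∼ N(0,1)`: `E[Ĥ(√(q_d/(1-q_d)) ξ)²] = (2/π) arcsin q_d`. -/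
theorem gaussian_erf_sq_expectation (qd : ℝ) (h0 : 0 ≤ qd) (h1 : qd < 1) :
    ∫ ξ, (errorFun (Real.sqrt (qd / (1 - qd)) * ξ / Real.sqrt 2)) ^ 2
        ∂(gaussianReal 0 1)
      = (2 / Real.pi) * Real.arcsin qd := by
  rcases eq_or_lt_of_le h0 with rfl | hq
  · simp [errorFun]
  have h1' : (0:ℝ) < 1 - qd := by linarith
  set k : ℝ := qd / (1 - qd) with hkdef
  have hk : 0 < k := div_pos hq h1'
  set E : ℝ → ℝ → ℝ := fun x v => Real.exp (-(k * v ^ 2 / 2) * x ^ 2) with hEdef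
  set I : ℝ → ℝ := fun x => ∫ v in Ioc (0:ℝ) 1, E x v with hIdef
  have hIcont : Continuous I := continuous_paramI k hk.le
  have hEcont : Continuous (Function.uncurry E) := by
    apply Real.continuous_exp.comp
    fun_prop
  have hE_nonneg : ∀ x v, 0 ≤ E x v := fun x v => Real.exp_nonneg _
  have hE_le_one : ∀ x v, E x v ≤ 1 := by
    intro x v
    apply Real.exp_le_one_iff.2
    have : 0 ≤ k * v ^ 2 / 2 * x ^ 2 := by positivity
    linarith
  have hI_nonneg : ∀ x, 0 ≤ I x := fun x => integral_nonneg fun v => hE_nonneg x v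
  have hI_le_one : ∀ x, I x ≤ 1 := by
    intro x
    calc I x ≤ ∫ _v in Ioc (0:ℝ) 1, (1:ℝ) := by
          apply integral_mono_of_nonneg (ae_of_all _ fun v => hE_nonneg x v)
            (integrable_const _) (ae_of_all _ fun v => hE_le_one x v)
      _ = 1 := by simp
  set Q : ℝ → ℝ := fun x => (Real.sqrt (2*π))⁻¹ * Real.exp (-(1/2 : ℝ) * x ^ 2) with hQdef
  have hQcont : Continuous Q := by fun_prop
  have hQ_nonneg : ∀ x, 0 ≤ Q x := fun x => by positivity
  have hQ_le : ∀ x, Q x ≤ Real.exp (-(1/2 : ℝ) * x ^ 2) := by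
    intro x
    have h2pi : (1:ℝ) ≤ Real.sqrt (2*π) := by
      rw [show (1:ℝ) = Real.sqrt 1 by simp]
      exact Real.sqrt_le_sqrt (by nlinarith [Real.pi_gt_three])
    calc Q x = (Real.sqrt (2*π))⁻¹ * Real.exp (-(1/2 : ℝ) * x ^ 2) := rfl
      _ ≤ 1 * Real.exp (-(1/2 : ℝ) * x ^ 2) := by
          gcongr
          exact inv_le_one_of_one_le₀ h2pi
      _ = Real.exp (-(1/2 : ℝ) * x ^ 2) := one_mul _
  -- Step 1 : pointwise identity
  have step1 : ∀ ξ : ℝ, (errorFun (Real.sqrt k * ξ / Real.sqrt 2)) ^ 2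
      = (2 * k / π) * (ξ ^ 2 * (I ξ) ^ 2) := by
    intro ξ
    set x : ℝ := Real.sqrt k * ξ / Real.sqrt 2 with hxdef
    have hx2 : x ^ 2 = k * ξ ^ 2 / 2 := by
      rw [hxdef, div_pow, mul_pow, Real.sq_sqrt hk.le, Real.sq_sqrt (by norm_num : (0:ℝ) ≤ 2)]
    have hint : (∫ v in (0:ℝ)..1, Real.exp (-(x*v) ^ 2)) = I ξ := by
      rw [intervalIntegral.integral_of_le zero_le_one]
      apply setIntegral_congr_fun measurableSet_Ioc
      intro v _
      show Real.exp (-(x*v) ^ 2) = Real.exp (-(k * v ^ 2 / 2) * ξ ^ 2)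
      rw [show -(x * v) ^ 2 = -(k * v ^ 2 / 2) * ξ ^ 2 from by rw [mul_pow, hx2]; ring]
    rw [errorFun_eq x, hint]
    have hpisqrt : (2 / Real.sqrt π) ^ 2 = 4 / π := by
      rw [div_pow, Real.sq_sqrt Real.pi_pos.le]; norm_num
    calc ((2 / Real.sqrt π) * (x * I ξ)) ^ 2
        = (2 / Real.sqrt π) ^ 2 * (x ^ 2 * (I ξ) ^ 2) := by ring
      _ = 4 / π * (k * ξ ^ 2 / 2 * (I ξ) ^ 2) := by rw [hpisqrt, hx2]
      _ = (2 * k / π) * (ξ ^ 2 * (I ξ) ^ 2) := by ring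
  -- Step 2 : reduce to Lebesgue integral
  have step2 : ∫ ξ, (errorFun (Real.sqrt k * ξ / Real.sqrt 2)) ^ 2 ∂(gaussianReal 0 1)
      = (2 * k / π) * ∫ x : ℝ, Q x * (x ^ 2 * (I x) ^ 2) := by
    rw [integral_congr_ae (ae_of_all _ step1), integral_const_mul,
      integral_gaussianReal_std]
    congr 1
    apply integral_congr_ae (ae_of_all _ fun x => ?_)
    rw [gaussianPDFReal_std x]
  -- generic bound discharge
  have hbound : ∀ (g : ℝ → ℝ), (∀ x, 0 ≤ g x) → (∀ x, g x ≤ Q x * x ^ 2) →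
      ∀ (x v : ℝ), v ∈ Set.Ioc (0:ℝ) 1 → ‖g x * E x v‖ ≤ x ^ 2 * Real.exp (-(1/2 : ℝ) * x ^ 2) := by
    intro g hg0 hgle x v _
    rw [Real.norm_of_nonneg (mul_nonneg (hg0 x) (hE_nonneg x v))]
    calc g x * E x v ≤ (Q x * x ^ 2) * 1 := by
          apply mul_le_mul (hgle x) (hE_le_one x v) (hE_nonneg x v)
          positivity
      _ ≤ (Real.exp (-(1/2 : ℝ) * x ^ 2) * x ^ 2) * 1 := by
          gcongr
          exact hQ_le x
      _ = x ^ 2 * Real.exp (-(1/2 : ℝ) * x ^ 2) := by ring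
  -- Step 3 : first Fubini
  have step3 : ∫ x : ℝ, Q x * (x ^ 2 * (I x) ^ 2)
      = ∫ v in Ioc (0:ℝ) 1, ∫ x : ℝ, (Q x * x ^ 2 * I x) * E x v := by
    rw [← fubini_aux (f := fun x v => (Q x * x ^ 2 * I x) * E x v)]
    · apply integral_congr_ae (ae_of_all _ fun x => ?_)
      rw [integral_const_mul]
      show Q x * (x ^ 2 * I x ^ 2) = (Q x * x ^ 2 * I x) * I x
      ring
    · exact (((hQcont.mul (continuous_pow 2)).mul hIcont).fst'.mul hEcont)
    · intro x v hv
      exact hbound (fun y => Q y * y ^ 2 * I y) (fun y => by positivity)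
        (fun y => by
          show Q y * y ^ 2 * I y ≤ Q y * y ^ 2
          simpa using mul_le_mul_of_nonneg_left (hI_le_one y)
            (by positivity : (0:ℝ) ≤ Q y * y ^ 2)) x v hv
  -- Step 4 : second Fubini (for fixed v)
  have step4 : ∀ v : ℝ, ∫ x : ℝ, (Q x * x ^ 2 * I x) * E x v
      = ∫ w in Ioc (0:ℝ) 1, ∫ x : ℝ, (Q x * x ^ 2 * E x v) * E x w := by
    intro v
    rw [← fubini_aux (f := fun x w => (Q x * x ^ 2 * E x v) * E x w)]
    · apply integral_congr_ae (ae_of_all _ fun x => ?_)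
      rw [integral_const_mul]
      show (Q x * x ^ 2 * I x) * E x v = (Q x * x ^ 2 * E x v) * I x
      ring
    · exact (((hQcont.mul (continuous_pow 2)).fst'.mul
        (hEcont.comp (continuous_fst.prodMk continuous_const))).mul hEcont)
    · intro x w hw
      exact hbound (fun y => Q y * y ^ 2 * E y v) (fun y => by positivity)
        (fun y => by
          show Q y * y ^ 2 * E y v ≤ Q y * y ^ 2
          simpa using mul_le_mul_of_nonneg_left (hE_le_one y v)
            (by positivity : (0:ℝ) ≤ Q y * y ^ 2)) x w hw
  -- Step 5 : innermost Gaussian moment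
  have step5 : ∀ v w : ℝ, ∫ x : ℝ, (Q x * x ^ 2 * E x v) * E x w
      = 1 / ((1 + k * v ^ 2 + k * w ^ 2) * Real.sqrt (1 + k * v ^ 2 + k * w ^ 2)) := by
    intro v w
    set c : ℝ := 1 + k * v ^ 2 + k * w ^ 2 with hcdef
    have hc : 0 < c := by positivity
    have hexp : ∀ x : ℝ, Real.exp (-(1/2 : ℝ) * x ^ 2) * Real.exp (-(k * v ^ 2 / 2) * x ^ 2)
        * Real.exp (-(k * w ^ 2 / 2) * x ^ 2) = Real.exp (-(c/2) * x ^ 2) := by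
      intro x
      rw [← Real.exp_add, ← Real.exp_add]
      congr 1
      rw [hcdef]; ring
    have hpt : ∀ x : ℝ, (Q x * x ^ 2 * E x v) * E x w
        = (Real.sqrt (2*π))⁻¹ * (x ^ 2 * Real.exp (-(c/2) * x ^ 2)) := by
      intro x
      calc (Q x * x ^ 2 * E x v) * E x w
          = (Real.sqrt (2*π))⁻¹ * (x ^ 2 * (Real.exp (-(1/2 : ℝ) * x ^ 2)
            * Real.exp (-(k * v ^ 2 / 2) * x ^ 2) * Real.exp (-(k * w ^ 2 / 2) * x ^ 2))) := by
            show ((Real.sqrt (2*π))⁻¹ * Real.exp (-(1/2 : ℝ) * x ^ 2) * x ^ 2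
              * Real.exp (-(k * v ^ 2 / 2) * x ^ 2)) * Real.exp (-(k * w ^ 2 / 2) * x ^ 2) = _
            ring
        _ = (Real.sqrt (2*π))⁻¹ * (x ^ 2 * Real.exp (-(c/2) * x ^ 2)) := by rw [hexp x]
    rw [integral_congr_ae (ae_of_all _ hpt), integral_const_mul, moment2 c hc]
    have hsp : (0:ℝ) < Real.sqrt (2*π) := Real.sqrt_pos.2 (by positivity)
    field_simp
  -- Step 6 : evaluate the double integral
  have step6 : ∫ v in Ioc (0:ℝ) 1, ∫ w in Ioc (0:ℝ) 1,
      1 / ((1 + k * v ^ 2 + k * w ^ 2) * Real.sqrt (1 + k * v ^ 2 + k * w ^ 2))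
      = (1/k) * Real.arctan (k / Real.sqrt (1 + 2*k)) := by
    have inner_eval : ∀ v : ℝ, ∫ w in Ioc (0:ℝ) 1,
        1 / ((1 + k * v ^ 2 + k * w ^ 2) * Real.sqrt (1 + k * v ^ 2 + k * w ^ 2))
        = 1 / ((1 + k * v ^ 2) * Real.sqrt (1 + k + k * v ^ 2)) := by
      intro v
      rw [← intervalIntegral.integral_of_le zero_le_one,
        inner_ftc (1 + k * v ^ 2) k (by positivity) hk.le,
        show 1 + k * v ^ 2 + k = 1 + k + k * v ^ 2 by ring]
    rw [integral_congr_ae (ae_of_all _ inner_eval),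
      ← intervalIntegral.integral_of_le zero_le_one, outer_ftc k hk]
  -- put everything together
  rw [step2, step3]
  rw [integral_congr_ae (ae_of_all _ fun v => by rw [step4 v])]
  rw [integral_congr_ae (ae_of_all _ fun v => by
    rw [integral_congr_ae (ae_of_all _ fun w => by rw [step5 v w])])]
  rw [step6, ← mul_assoc, show 2 * k / π * (1/k) = 2 / π from by field_simp]
  rw [hkdef, arctan_eq_arcsin_qd qd hq h1]

end Main
end

section
/- Consider the linear two-layer network with output φ_out(h) = σ( K^{-1/2} Σ_{l=1}^K h_l ) for a real function σ, weights with identity prior covariance, and a replica-symmetric overlap matrix q ∈ S_K^+ with I_K − q ∈ S_K^+. Then the channel term I_C of the replica free entropy depends on q only through the scalar Γ(q) = K^{-1} 1_K^T q 1_K ∈ [0,1]; in particular the extremizing overlap matrix has all entries equal, q_{ll'} = q/K for some scalar q, and no specialization occurs. -/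
open MeasureTheory ProbabilityTheory Matrix

/-- The positive square root of a positive semi-definite matrix (junk value `0` otherwise). -/
noncomputable def msqrt {K : ℕ} (r : Matrix (Fin K) (Fin K) ℝ) :
    Matrix (Fin K) (Fin K) ℝ := by
  classical exact if h : r.PosSemidef then
    (h.1.eigenvectorUnitary.1 * diagonal ((↑) ∘ (√·) ∘ h.1.eigenvalues) *
      (star h.1.eigenvectorUnitary : Matrix (Fin K) (Fin K) ℝ)) else 0

/-- The standard Gaussian measure on `ℝ^K`. -/
noncomputable def stdGaussianPi (K : ℕ) : Measure (Fin K → ℝ) :=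
  Measure.pi fun _ : Fin K => gaussianReal 0 1

/-- `Γ(q) = K⁻¹ 1ᵀ q 1`. -/
noncomputable def GammaOf {K : ℕ} (q : Matrix (Fin K) (Fin K) ℝ) : ℝ :=
  (K : ℝ)⁻¹ * ∑ l, ∑ l', q l l'

/-- Inner replica channel integral `I_C(y, ξ)` of the linear network
`φ_out(h) = σ(K^{-1/2} ∑ₗ hₗ)` with identity prior covariance and overlap `q`. -/
noncomputable def ICinner {K : ℕ} (Pout : ℝ → ℝ → ℝ) (σ : ℝ → ℝ)
    (q : Matrix (Fin K) (Fin K) ℝ) (y : ℝ) (ξ : Fin K → ℝ) : ℝ :=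
  ∫ Z, Pout y (σ ((Real.sqrt K)⁻¹ *
      ∑ l, ((msqrt (1 - q)).mulVec Z + (msqrt q).mulVec ξ) l)) ∂(stdGaussianPi K)

/-- The channel term `I_C(q) = ∫ dy ∫ Dξ I_C(y,ξ) log I_C(y,ξ)` of the replica free entropy. -/
noncomputable def ICterm {K : ℕ} (Pout : ℝ → ℝ → ℝ) (σ : ℝ → ℝ)
    (q : Matrix (Fin K) (Fin K) ℝ) : ℝ :=
  ∫ y, ∫ ξ, ICinner Pout σ q y ξ * Real.log (ICinner Pout σ q y ξ)
    ∂(stdGaussianPi K) ∂(volume : Measure ℝ)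


section aux
open Real
open scoped ENNReal NNReal

lemma pdf_prod (a b : ℝ≥0) (ha : a ≠ 0) (hb : b ≠ 0) (x y : ℝ) :
    gaussianPDFReal 0 a x * gaussianPDFReal 0 b (y - x)
      = gaussianPDFReal 0 (a + b) y
        * gaussianPDFReal ((a : ℝ) * y / ((a : ℝ) + b)) (a * b / (a + b)) x := by
  have ha' : (0:ℝ) < a := lt_of_le_of_ne a.coe_nonneg (by exact_mod_cast ha.symm)
  have hb' : (0:ℝ) < b := lt_of_le_of_ne b.coe_nonneg (by exact_mod_cast hb.symm)
  have hab : (0:ℝ) < (a:ℝ) + b := by linarith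
  simp only [gaussianPDFReal, sub_zero, NNReal.coe_add, NNReal.coe_div, NNReal.coe_mul]
  rw [mul_mul_mul_comm, mul_mul_mul_comm (√(2 * π * ((a:ℝ)+b)))⁻¹, ← Real.exp_add,
    ← Real.exp_add, ← mul_inv, ← mul_inv, ← Real.sqrt_mul (by positivity),
    ← Real.sqrt_mul (by positivity)]
  congr 2
  · congr 1
    field_simp
  · field_simp
    ring

lemma integral_pdf_conv (a b : ℝ≥0) (ha : a ≠ 0) (hb : b ≠ 0) (y : ℝ) :
    ∫ x, gaussianPDFReal 0 a x * gaussianPDFReal 0 b (y - x) = gaussianPDFReal 0 (a + b) y := by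
  have hc : a * b / (a + b) ≠ 0 := by
    have : a + b ≠ 0 := by simp [ha]
    positivity
  simp_rw [pdf_prod a b ha hb _ y]
  rw [integral_const_mul, integral_gaussianPDFReal_eq_one _ hc, mul_one]

lemma integrable_pdf_conv (a b : ℝ≥0) (ha : a ≠ 0) (hb : b ≠ 0) (y : ℝ) :
    Integrable (fun x => gaussianPDFReal 0 a x * gaussianPDFReal 0 b (y - x)) := by
  simp_rw [pdf_prod a b ha hb _ y]
  exact (integrable_gaussianPDFReal _ _).const_mul _

lemma gaussian_conv (a b : ℝ≥0) :
    ((gaussianReal 0 a).prod (gaussianReal 0 b)).map (fun p : ℝ × ℝ => p.1 + p.2)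
      = gaussianReal 0 (a + b) := by
  rcases eq_or_ne a 0 with rfl | ha
  · rw [gaussianReal_zero_var, Measure.dirac_prod, Measure.map_map measurable_add measurable_prodMk_left,
      zero_add]
    have : ((fun p : ℝ × ℝ => p.1 + p.2) ∘ Prod.mk (0:ℝ)) = id := by
      funext z; simp
    rw [this, Measure.map_id]
  rcases eq_or_ne b 0 with rfl | hb
  · rw [gaussianReal_zero_var, Measure.prod_dirac, Measure.map_map measurable_add
      (measurable_prodMk_right), add_zero]
    have : ((fun p : ℝ × ℝ => p.1 + p.2) ∘ (fun x : ℝ => (x, (0:ℝ)))) = id := by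
      funext z; simp
    rw [this, Measure.map_id]
  have hab : a + b ≠ 0 := by simp [ha]
  ext s hs
  rw [Measure.map_apply measurable_add hs, gaussianReal_of_var_ne_zero _ hab,
    withDensity_apply _ hs]
  have hpre : MeasurableSet ((fun p : ℝ × ℝ => p.1 + p.2) ⁻¹' s) := measurable_add hs
  rw [Measure.prod_apply hpre]
  rw [gaussianReal_of_var_ne_zero _ ha,
    lintegral_withDensity_eq_lintegral_mul _ (measurable_gaussianPDF 0 a)
      (measurable_measure_prodMk_left hpre)]
  have inner_eq : ∀ x : ℝ, (gaussianReal 0 b) (Prod.mk x ⁻¹' ((fun p : ℝ × ℝ => p.1 + p.2) ⁻¹' s))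
      = ∫⁻ z, s.indicator (fun _ => (1:ℝ≥0∞)) z * gaussianPDF 0 b (z - x) := by
    intro x
    have hset : MeasurableSet (Prod.mk x ⁻¹' ((fun p : ℝ × ℝ => p.1 + p.2) ⁻¹' s)) :=
      measurable_prodMk_left hpre
    rw [gaussianReal_of_var_ne_zero _ hb, withDensity_apply _ hset,
      ← lintegral_indicator hset]
    calc ∫⁻ z, (Prod.mk x ⁻¹' ((fun p : ℝ × ℝ => p.1 + p.2) ⁻¹' s)).indicator
          (gaussianPDF 0 b) z
        = ∫⁻ z, (fun w => s.indicator (fun _ => (1:ℝ≥0∞)) (x + w) * gaussianPDF 0 b w) z := by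
          congr 1; funext z
          by_cases hz : x + z ∈ s <;>
            simp [Set.indicator, hz, Set.mem_preimage]
      _ = ∫⁻ z, (fun w => s.indicator (fun _ => (1:ℝ≥0∞)) w * gaussianPDF 0 b (w - x)) (z + x) := by
          congr 1; funext z; simp [add_comm]
      _ = ∫⁻ z, s.indicator (fun _ => (1:ℝ≥0∞)) z * gaussianPDF 0 b (z - x) :=
          lintegral_add_right_eq_self
            (fun w => s.indicator (fun _ => (1:ℝ≥0∞)) w * gaussianPDF 0 b (w - x)) x
  simp_rw [inner_eq, Pi.mul_apply]
  have pull : ∀ x : ℝ, gaussianPDF 0 a x * ∫⁻ z, s.indicator (fun _ => (1:ℝ≥0∞)) z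
      * gaussianPDF 0 b (z - x)
      = ∫⁻ z, gaussianPDF 0 a x * (s.indicator (fun _ => (1:ℝ≥0∞)) z * gaussianPDF 0 b (z - x)) :=
    fun x => (lintegral_const_mul' _ _ ENNReal.ofReal_ne_top).symm
  simp_rw [pull]
  rw [lintegral_lintegral_swap]
  · have inner2 : ∀ z : ℝ, (∫⁻ x, gaussianPDF 0 a x * (s.indicator (fun _ => (1:ℝ≥0∞)) z
        * gaussianPDF 0 b (z - x)))
        = s.indicator (fun _ => (1:ℝ≥0∞)) z * gaussianPDF 0 (a + b) z := by
      intro z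
      have hind : s.indicator (fun _ => (1:ℝ≥0∞)) z ≠ ⊤ := by
        by_cases hz : z ∈ s <;> simp [Set.indicator, hz]
      calc (∫⁻ x, gaussianPDF 0 a x * (s.indicator (fun _ => (1:ℝ≥0∞)) z
            * gaussianPDF 0 b (z - x)))
          = ∫⁻ x, s.indicator (fun _ => (1:ℝ≥0∞)) z
              * (gaussianPDF 0 a x * gaussianPDF 0 b (z - x)) := by
            congr 1; funext x; ring
        _ = s.indicator (fun _ => (1:ℝ≥0∞)) z
              * ∫⁻ x, gaussianPDF 0 a x * gaussianPDF 0 b (z - x) :=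
            lintegral_const_mul' _ _ hind
        _ = s.indicator (fun _ => (1:ℝ≥0∞)) z * gaussianPDF 0 (a + b) z := by
            congr 1
            have : ∀ x : ℝ, gaussianPDF 0 a x * gaussianPDF 0 b (z - x)
                = ENNReal.ofReal (gaussianPDFReal 0 a x * gaussianPDFReal 0 b (z - x)) := by
              intro x
              rw [gaussianPDF, gaussianPDF,
                ENNReal.ofReal_mul (gaussianPDFReal_nonneg _ _ _)]
            simp_rw [this]
            rw [← ofReal_integral_eq_lintegral_ofReal (integrable_pdf_conv a b ha hb z)
              (ae_of_all _ fun x => mul_nonneg (gaussianPDFReal_nonneg _ _ _)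
                (gaussianPDFReal_nonneg _ _ _)),
              integral_pdf_conv a b ha hb z]
            rfl
    simp_rw [inner2]
    rw [← lintegral_indicator hs]
    congr 1; funext z
    by_cases hz : z ∈ s <;> simp [Set.indicator, hz]
  · apply Measurable.aemeasurable
    apply Measurable.mul
    · exact (measurable_gaussianPDF 0 a).comp measurable_fst
    apply Measurable.mul
    · exact (measurable_indicator_const_iff 1).mpr hs |>.comp measurable_snd
    · exact (measurable_gaussianPDF 0 b).comp (measurable_snd.sub measurable_fst)

lemma map_linear_stdGaussian : ∀ (K : ℕ) (c : Fin K → ℝ),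
    (Measure.pi fun _ : Fin K => gaussianReal 0 1).map (fun x => ∑ j, c j * x j)
      = gaussianReal 0 (∑ j, (NNReal.mk (c j ^ 2) (sq_nonneg _))) := by
  intro K
  induction K with
  | zero =>
    intro c
    have : (fun x : Fin 0 → ℝ => ∑ j, c j * x j) = fun _ => (0:ℝ) := by
      funext x; simp
    rw [this, Measure.map_const]
    simp [gaussianReal_zero_var]
  | succ n ih =>
    intro c
    have mp := measurePreserving_piFinSuccAbove (fun _ : Fin (n+1) => gaussianReal 0 1) 0
    set e := MeasurableEquiv.piFinSuccAbove (fun _ : Fin (n+1) => ℝ) 0 with he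
    have hcomp : (fun x : Fin (n+1) → ℝ => ∑ j, c j * x j)
        = (fun p : ℝ × (Fin n → ℝ) => c 0 * p.1 + ∑ j, c (Fin.succ j) * p.2 j) ∘ e := by
      funext x
      simp [he, MeasurableEquiv.piFinSuccAbove_apply, Fin.sum_univ_succ,
        Fin.insertNthEquiv, Fin.zero_succAbove, Fin.tail]
    rw [hcomp, ← Measure.map_map (by fun_prop) e.measurable, mp.map_eq]
    have hG : (fun p : ℝ × (Fin n → ℝ) => c 0 * p.1 + ∑ j, c (Fin.succ j) * p.2 j)
        = (fun p : ℝ × ℝ => p.1 + p.2) ∘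
            (Prod.map (fun t : ℝ => c 0 * t) (fun y : Fin n → ℝ => ∑ j, c (Fin.succ j) * y j)) := by
      funext p; rfl
    rw [hG, ← Measure.map_map measurable_add (by fun_prop),
      ← Measure.map_prod_map _ _ (by fun_prop) (by fun_prop),
      gaussianReal_map_const_mul, ih]
    rw [show c 0 * 0 = (0:ℝ) by ring, show (NNReal.mk (c 0 ^ 2) (sq_nonneg _)) * 1 = NNReal.mk (c 0 ^ 2) (sq_nonneg _) by ring,
      gaussian_conv]
    congr 1
    rw [Fin.sum_univ_succ]

lemma integral_linear_stdGaussian (K : ℕ) (c : Fin K → ℝ) (f : ℝ → ℝ) (hf : Measurable f) :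
    ∫ x, f (∑ j, c j * x j) ∂(Measure.pi fun _ : Fin K => gaussianReal 0 1)
      = ∫ t, f t ∂gaussianReal 0 (∑ j, (NNReal.mk (c j ^ 2) (sq_nonneg _))) := by
  rw [← map_linear_stdGaussian K c]
  exact (integral_map (φ := fun x : Fin K → ℝ => ∑ j, c j * x j)
    (Measurable.aemeasurable (by fun_prop)) hf.aestronglyMeasurable).symm

lemma msqrt_sq_sum {K : ℕ} {A : Matrix (Fin K) (Fin K) ℝ} (hA : A.PosSemidef) :
    ∑ j, (∑ l, msqrt A l j) ^ 2 = ∑ l, ∑ l', A l l' := by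
  have hm : msqrt A = (hA.1.eigenvectorUnitary.1 * diagonal ((↑) ∘ (√·) ∘ hA.1.eigenvalues) *
      (star hA.1.eigenvectorUnitary : Matrix (Fin K) (Fin K) ℝ)) := dif_pos hA
  set S := msqrt A with hSdef
  have hS : S * S = A := by
    rw [hm]
    conv_rhs => rw [hA.1.spectral_theorem, Unitary.conjStarAlgAut_apply]
    have hD : diagonal (((↑) : ℝ → ℝ) ∘ (√·) ∘ hA.1.eigenvalues)
        * diagonal (((↑) : ℝ → ℝ) ∘ (√·) ∘ hA.1.eigenvalues)
        = diagonal (RCLike.ofReal ∘ hA.1.eigenvalues) := by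
      rw [diagonal_mul_diagonal]; congr 1; funext i
      simp [Real.mul_self_sqrt (hA.eigenvalues_nonneg i)]
    rw [← hD]
    have hU := Unitary.coe_star_mul_self hA.1.eigenvectorUnitary
    simp only [Matrix.mul_assoc] at hU ⊢
    rw [← Matrix.mul_assoc (star _) _ (_ * star _), hU, Matrix.one_mul]
  have hsym : ∀ i j, S i j = S j i := by
    intro i j
    have h : (hA.1.eigenvectorUnitary.1 * diagonal ((↑) ∘ (√·) ∘ hA.1.eigenvalues) *
      (star hA.1.eigenvectorUnitary : Matrix (Fin K) (Fin K) ℝ))ᴴ = (hA.1.eigenvectorUnitary.1 * diagonal ((↑) ∘ (√·) ∘ hA.1.eigenvalues) *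
      (star hA.1.eigenvectorUnitary : Matrix (Fin K) (Fin K) ℝ)) := by
      simp [Matrix.mul_assoc, Matrix.star_eq_conjTranspose, Matrix.conjTranspose_eq_transpose_of_trivial]
    rw [hm]
    conv_lhs => rw [← h]
    simp [Matrix.conjTranspose_apply]
  have key : ∀ j, ∑ l, ∑ l', S l j * S j l' = (∑ l, S l j) ^ 2 := by
    intro j
    rw [← Finset.sum_mul_sum, sq]
    congr 1
    exact Finset.sum_congr rfl fun l' _ => hsym j l'
  calc ∑ j, (∑ l, S l j) ^ 2 = ∑ j, ∑ l, ∑ l', S l j * S j l' := by simp_rw [key]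
    _ = ∑ l, ∑ j, ∑ l', S l j * S j l' := Finset.sum_comm
    _ = ∑ l, ∑ l', ∑ j, S l j * S j l' := Finset.sum_congr rfl fun l _ => Finset.sum_comm
    _ = ∑ l, ∑ l', A l l' := by
        refine Finset.sum_congr rfl fun l _ => Finset.sum_congr rfl fun l' _ => ?_
        rw [← hS, Matrix.mul_apply]

lemma posSemidef_sum_nonneg {K : ℕ} {A : Matrix (Fin K) (Fin K) ℝ} (hA : A.PosSemidef) :
    0 ≤ ∑ l, ∑ l', A l l' := by
  have h := hA.dotProduct_mulVec_nonneg (fun _ => (1:ℝ))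
  simpa [dotProduct, Matrix.mulVec] using h

lemma sum_one_matrix (K : ℕ) : ∑ l : Fin K, ∑ l' : Fin K, (1 : Matrix (Fin K) (Fin K) ℝ) l l'
    = K := by
  simp [Matrix.one_apply, Finset.sum_ite_eq]

lemma sum_mulVec {K : ℕ} (M : Matrix (Fin K) (Fin K) ℝ) (Z : Fin K → ℝ) :
    ∑ l, (M *ᵥ Z) l = ∑ j, (∑ l, M l j) * Z j := by
  simp only [Matrix.mulVec, dotProduct]
  rw [Finset.sum_comm]
  simp [Finset.sum_mul]

lemma gamma_nonneg {K : ℕ} {q : Matrix (Fin K) (Fin K) ℝ} (hq : q.PosSemidef) :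
    0 ≤ GammaOf q :=
  mul_nonneg (inv_nonneg.2 (Nat.cast_nonneg K)) (posSemidef_sum_nonneg hq)

lemma sum_le_card {K : ℕ} {q : Matrix (Fin K) (Fin K) ℝ} (hq1 : (1 - q).PosSemidef) :
    ∑ l, ∑ l', q l l' ≤ K := by
  have h := posSemidef_sum_nonneg hq1
  simp only [Matrix.sub_apply, Finset.sum_sub_distrib] at h
  rw [sum_one_matrix] at h
  linarith

lemma gamma_le_one {K : ℕ} (hK : 0 < K) {q : Matrix (Fin K) (Fin K) ℝ}
    (hq1 : (1 - q).PosSemidef) : GammaOf q ≤ 1 := by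
  have h := sum_le_card hq1
  have hK' : (0:ℝ) < K := Nat.cast_pos.2 hK
  rw [GammaOf, inv_mul_le_iff₀ hK', mul_one]
  exact h

noncomputable def chanF (Pout : ℝ → ℝ → ℝ) (σ : ℝ → ℝ) (g : ℝ) (y m : ℝ) : ℝ :=
  ∫ t, Pout y (σ (t + m)) ∂gaussianReal 0 (Real.toNNReal (1 - g))

lemma ICterm_eq_of (K : ℕ) (hK : 0 < K) (Pout : ℝ → ℝ → ℝ)
    (hPout : Measurable (Function.uncurry Pout)) (σ : ℝ → ℝ) (hσ : Measurable σ)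
    (q : Matrix (Fin K) (Fin K) ℝ) (hq : q.PosSemidef) (hq1 : (1 - q).PosSemidef) :
    ICterm Pout σ q
      = ∫ y, ∫ m, chanF Pout σ (GammaOf q) y m * Real.log (chanF Pout σ (GammaOf q) y m)
          ∂gaussianReal 0 (Real.toNNReal (GammaOf q)) ∂(volume : Measure ℝ) := by
  have hK' : (0:ℝ) < K := Nat.cast_pos.2 hK
  set g := GammaOf q with hgdef
  have hg0 : 0 ≤ g := gamma_nonneg hq
  have hg1 : g ≤ 1 := gamma_le_one hK hq1
  have hsqK : ((Real.sqrt K)⁻¹) ^ 2 = (K:ℝ)⁻¹ := by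
    rw [inv_pow, Real.sq_sqrt (Nat.cast_nonneg K)]
  -- variance identities
  have hVS : (∑ j, (NNReal.mk (((Real.sqrt K)⁻¹ * ∑ l, msqrt (1 - q) l j) ^ 2) (sq_nonneg _)))
      = Real.toNNReal (1 - g) := by
    rw [← NNReal.coe_inj, NNReal.coe_sum]
    simp only [NNReal.coe_mk]
    simp_rw [mul_pow, hsqK]
    rw [← Finset.mul_sum, msqrt_sq_sum hq1, Real.coe_toNNReal _ (by linarith)]
    simp only [Matrix.sub_apply, Finset.sum_sub_distrib, sum_one_matrix]
    rw [hgdef, GammaOf]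
    field_simp
  have hVT : (∑ j, (NNReal.mk (((Real.sqrt K)⁻¹ * ∑ l, msqrt q l j) ^ 2) (sq_nonneg _)))
      = Real.toNNReal g := by
    rw [← NNReal.coe_inj, NNReal.coe_sum]
    simp only [NNReal.coe_mk]
    simp_rw [mul_pow, hsqK]
    rw [← Finset.mul_sum, msqrt_sq_sum hq, Real.coe_toNNReal _ hg0]
    rw [hgdef, GammaOf]
  -- measurability
  have hPy : ∀ y : ℝ, Measurable (Pout y) := fun y =>
    hPout.comp (measurable_const.prodMk measurable_id)
  have hchan : ∀ y : ℝ, Measurable (chanF Pout σ g y) := by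
    intro y
    have hsm : StronglyMeasurable (fun p : ℝ × ℝ => Pout y (σ (p.2 + p.1))) :=
      ((hPy y).comp (hσ.comp (measurable_snd.add measurable_fst))).stronglyMeasurable
    exact hsm.integral_prod_right'.measurable
  -- inner rewrite
  have hinner : ∀ (y : ℝ) (ξ : Fin K → ℝ), ICinner Pout σ q y ξ
      = chanF Pout σ g y (∑ j, ((Real.sqrt K)⁻¹ * ∑ l, msqrt q l j) * ξ j) := by
    intro y ξ
    have hrw : ∀ Z : Fin K → ℝ,
        (Real.sqrt K)⁻¹ * ∑ l, ((msqrt (1 - q)).mulVec Z + (msqrt q).mulVec ξ) l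
          = (∑ j, ((Real.sqrt K)⁻¹ * ∑ l, msqrt (1 - q) l j) * Z j)
            + ∑ j, ((Real.sqrt K)⁻¹ * ∑ l, msqrt q l j) * ξ j := by
      intro Z
      simp only [Pi.add_apply]
      rw [Finset.sum_add_distrib, mul_add, _root_.sum_mulVec, _root_.sum_mulVec, Finset.mul_sum,
        Finset.mul_sum]
      congr 1 <;> exact Finset.sum_congr rfl fun j _ => by ring
    rw [ICinner]
    simp_rw [hrw]
    rw [stdGaussianPi, integral_linear_stdGaussian K _
      (fun t => Pout y (σ (t + ∑ j, ((Real.sqrt K)⁻¹ * ∑ l, msqrt q l j) * ξ j)))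
      ((hPy y).comp (hσ.comp (measurable_id.add_const _))), hVS, chanF]
  rw [ICterm]
  refine integral_congr_ae (Filter.Eventually.of_forall fun y => ?_)
  simp_rw [hinner]
  rw [stdGaussianPi, integral_linear_stdGaussian K _
    (fun m => chanF Pout σ g y m * Real.log (chanF Pout σ g y m))
    ((hchan y).mul (Real.measurable_log.comp (hchan y))), hVT]

lemma const_posSemidef {K : ℕ} {c : ℝ} (hc : 0 ≤ c) :
    ((c • (Matrix.of fun _ _ : Fin K => (1:ℝ))) : Matrix (Fin K) (Fin K) ℝ).PosSemidef := by
  refine PosSemidef.of_dotProduct_mulVec_nonneg ?_ ?_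
  · ext i j
    simp [Matrix.conjTranspose_apply]
  · intro x
    have : dotProduct (star x) ((c • (Matrix.of fun _ _ : Fin K => (1:ℝ))) *ᵥ x)
        = c * (∑ j, x j) ^ 2 := by
      simp only [dotProduct, Matrix.mulVec, Pi.star_apply, star_trivial,
        Matrix.smul_apply, Matrix.of_apply, smul_eq_mul, one_mul]
      simp_rw [mul_one, ← Finset.mul_sum, ← Finset.sum_mul]
      ring
    rw [this]
    positivity

lemma one_sub_const_posSemidef {K : ℕ} (hK : 0 < K) {g : ℝ} (hg0 : 0 ≤ g) (hg1 : g ≤ 1) :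
    ((1 : Matrix (Fin K) (Fin K) ℝ)
      - (g / K) • (Matrix.of fun _ _ : Fin K => (1:ℝ))).PosSemidef := by
  have hK' : (0:ℝ) < K := Nat.cast_pos.2 hK
  refine PosSemidef.of_dotProduct_mulVec_nonneg ?_ ?_
  · ext i j
    simp [Matrix.conjTranspose_apply, Matrix.one_apply, eq_comm]
  · intro x
    have hv : dotProduct (star x)
        (((1 : Matrix (Fin K) (Fin K) ℝ)
          - (g / K) • (Matrix.of fun _ _ : Fin K => (1:ℝ))) *ᵥ x)
        = ∑ j, (x j) ^ 2 - (g / K) * (∑ j, x j) ^ 2 := by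
      rw [Matrix.sub_mulVec, dotProduct_sub, Matrix.one_mulVec]
      congr 1
      · simp [dotProduct, sq]
      · simp only [dotProduct, Matrix.mulVec, Pi.star_apply, star_trivial,
          Matrix.smul_apply, Matrix.of_apply, smul_eq_mul, one_mul]
        simp_rw [mul_one, ← Finset.mul_sum, ← Finset.sum_mul]
        ring
    rw [hv]
    have hcs : (∑ j, x j) ^ 2 ≤ (K : ℝ) * ∑ j, (x j) ^ 2 := by
      simpa using sq_sum_le_card_mul_sum_sq (s := Finset.univ) (f := x)
    have hx2 : 0 ≤ ∑ j, (x j) ^ 2 := Finset.sum_nonneg fun j _ => sq_nonneg _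
    have h1 : (g / K) * (∑ j, x j) ^ 2 ≤ (g / K) * ((K:ℝ) * ∑ j, (x j) ^ 2) :=
      mul_le_mul_of_nonneg_left hcs (by positivity)
    have h2 : (g / K) * ((K:ℝ) * ∑ j, (x j) ^ 2) = g * ∑ j, (x j) ^ 2 := by
      field_simp
    nlinarith

lemma gamma_const {K : ℕ} (hK : 0 < K) (g : ℝ) :
    GammaOf ((g / K) • (Matrix.of fun _ _ : Fin K => (1:ℝ)) : Matrix (Fin K) (Fin K) ℝ) = g := by
  have hK' : (0:ℝ) < K := Nat.cast_pos.2 hK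
  simp only [GammaOf, Matrix.smul_apply, Matrix.of_apply, smul_eq_mul, mul_one,
    Finset.sum_const, Finset.card_univ, Fintype.card_fin, nsmul_eq_mul]
  field_simp


end aux

/-- **Linear networks show no specialization.** For the linear two-layer network with output
`φ_out(h) = σ(K^{-1/2} ∑ₗ hₗ)`, identity prior covariance, and replica-symmetric overlap
`q ∈ S_K^+` with `I_K − q ∈ S_K^+`, one has `Γ(q) = K⁻¹ 1ᵀq1 ∈ [0,1]`, the channel term `I_C`
depends on `q` only through `Γ(q)`, and in particular `I_C(q)` coincides with the channel term
of the overlap matrix all of whose entries equal `Γ(q)/K` — so no specialization occurs. -/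
theorem linear_network_no_specialization (K : ℕ) (hK : 0 < K)
    (Pout : ℝ → ℝ → ℝ) (hPout : Measurable (Function.uncurry Pout))
    (σ : ℝ → ℝ) (hσ : Measurable σ) :
    (∀ q : Matrix (Fin K) (Fin K) ℝ, q.PosSemidef → (1 - q).PosSemidef →
      0 ≤ GammaOf q ∧ GammaOf q ≤ 1)
    ∧ (∀ q q' : Matrix (Fin K) (Fin K) ℝ,
        q.PosSemidef → (1 - q).PosSemidef →
        q'.PosSemidef → (1 - q').PosSemidef →
        GammaOf q = GammaOf q' →
        ICterm Pout σ q = ICterm Pout σ q')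
    ∧ (∀ q : Matrix (Fin K) (Fin K) ℝ, q.PosSemidef → (1 - q).PosSemidef →
        ICterm Pout σ q
          = ICterm Pout σ
              ((GammaOf q / K) •
                (Matrix.of fun _ _ : Fin K => (1 : ℝ)) : Matrix (Fin K) (Fin K) ℝ)) := by

  have key : ∀ q q' : Matrix (Fin K) (Fin K) ℝ,
      q.PosSemidef → (1 - q).PosSemidef → q'.PosSemidef → (1 - q').PosSemidef →
      GammaOf q = GammaOf q' → ICterm Pout σ q = ICterm Pout σ q' := by
    intro q q' hq hq1 hq' hq'1 hΓ
    rw [ICterm_eq_of K hK Pout hPout σ hσ q hq hq1,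
      ICterm_eq_of K hK Pout hPout σ hσ q' hq' hq'1, hΓ]
  refine ⟨fun q hq hq1 => ⟨gamma_nonneg hq, gamma_le_one hK hq1⟩, key, ?_⟩
  intro q hq hq1
  have hg0 := gamma_nonneg hq
  have hg1 := gamma_le_one hK hq1
  exact key q _ hq hq1 (const_posSemidef (by positivity))
    (one_sub_const_posSemidef hK hg0 hg1) (gamma_const hK _).symm
end
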